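/- Fix positive integers s, t, α with α ≤ min s t, and a positive integer v with α * v = (s+1) * (s*t + α). Set k = s*(t+1), λ = s − 1 + t*(α − 1), μ = α*(t+1). Let G be a simple graph on Fin v with G.IsSRGWith v k λ μ. Let p be a prime with p ∣ v and p ∤ (s + t + 1 − α). Let A := G.adjMatrix (ZMod p), J the all-ones matrix over ZMod p, and 𝒜 the (ZMod p)-subalgebra of Matrix (Fin v) (Fin v) (ZMod p) spanned by {1, A, J}. Then the Jacobson radical of 𝒜 equals the (ZMod p)-span of J (viewed inside 𝒜); in particular it is one-dimensional over ZMod p and J² = 0 in 𝒜. -/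

import Mathlib

open Matrix

section Helpers
variable {n : Type*} [Fintype n] [DecidableEq n] {F : Type*} [Field F]

lemma srg8_kill {U Z W : Matrix n n F} (hWU : W * U = 1) (hUZ : U * Z = 0) : Z = 0 := by
  calc Z = (W * U) * Z := by rw [hWU, one_mul]
  _ = W * (U * Z) := by rw [mul_assoc]
  _ = 0 := by rw [hUZ, mul_zero]

lemma srg8_noinv {M B Jm : Matrix n n F} {β d e : F} (hβ : β ≠ 0)
    (hMB : M * B = β • B + d • Jm) (hMJ : M * Jm = e • Jm)
    (hB : ∀ w : F, B + w • Jm ≠ 0) (hJ : Jm ≠ 0)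
    {W : Matrix n n F} (hW : W * ((-β⁻¹) • M + 1) = 1) : False := by
  set U : Matrix n n F := (-β⁻¹) • M + 1 with hU
  by_cases he : e = β
  · have h1 : U * Jm = 0 := by
      rw [hU, add_mul, one_mul, smul_mul_assoc, hMJ, he, smul_smul, neg_mul,
        inv_mul_cancel₀ hβ]
      simp
    exact hJ (srg8_kill hW h1)
  · have hγ : 1 - β⁻¹ * e ≠ 0 := by
      intro h
      apply he
      field_simp at h
      linear_combination -h
    set w : F := (β⁻¹ * d) / (1 - β⁻¹ * e) with hw
    have h1 : U * (B + w • Jm) = 0 := by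
      rw [hU, add_mul, one_mul, smul_mul_assoc, mul_add, mul_smul_comm, hMB, hMJ]
      have hw2 : w * (1 - β⁻¹ * e) = β⁻¹ * d := by
        rw [hw, div_mul_cancel₀ _ hγ]
      match_scalars
      · field_simp
        ring
      · linear_combination hw2
    exact hB w (srg8_kill hW h1)

variable {V : Type*} [Fintype V] [DecidableEq V] (G : SimpleGraph V) [DecidableRel G.Adj]

lemma srg8_JmJm (hc : (Fintype.card V : F) = 0) :
    (of fun _ _ => (1 : F)) * (of fun _ _ => (1 : F)) = (0 : Matrix V V F) := by
  ext i j
  simp only [Matrix.mul_apply, of_apply, one_mul, Finset.sum_const, Finset.card_univ,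
    nsmul_eq_mul, mul_one, Matrix.zero_apply, hc]

lemma srg8_AJ {k : ℕ} (hreg : G.IsRegularOfDegree k) :
    G.adjMatrix F * (of fun _ _ => (1 : F)) = (k : F) • (of fun _ _ => (1 : F) : Matrix V V F) := by
  ext i j
  rw [SimpleGraph.adjMatrix_mul_apply]
  simp only [of_apply, Finset.sum_const, nsmul_eq_mul, mul_one, Matrix.smul_apply, smul_eq_mul,
    SimpleGraph.card_neighborFinset_eq_degree, hreg i]

lemma srg8_JA {k : ℕ} (hreg : G.IsRegularOfDegree k) :
    (of fun _ _ => (1 : F) : Matrix V V F) * G.adjMatrix F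
      = (k : F) • (of fun _ _ => (1 : F) : Matrix V V F) := by
  ext i j
  rw [SimpleGraph.mul_adjMatrix_apply]
  simp only [of_apply, Finset.sum_const, nsmul_eq_mul, mul_one, Matrix.smul_apply, smul_eq_mul,
    SimpleGraph.card_neighborFinset_eq_degree, hreg j]

lemma srg8_compl :
    Gᶜ.adjMatrix F = (of fun _ _ => 1) - 1 - G.adjMatrix F := by
  ext i j
  by_cases h : i = j
  · simp [h]
  · by_cases h2 : G.Adj i j <;> simp [h, h2, one_apply, SimpleGraph.compl_adj]

lemma srg8_A2 {n k l m : ℕ} (h : G.IsSRGWith n k l m) :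
    G.adjMatrix F * G.adjMatrix F = (k : F) • 1 + (l : F) • G.adjMatrix F
      + (m : F) • ((of fun _ _ => 1) - 1 - G.adjMatrix F) := by
  rw [← sq, h.matrix_eq, srg8_compl]
  simp [Nat.cast_smul_eq_nsmul]

end Helpers

set_option maxHeartbeats 1000000 in
set_option synthInstance.maxHeartbeats 200000 in
/-- Case (V) of Theorem 3.1 -/
theorem stmt_8 (s t α v : ℕ) (hs : 0 < s) (ht : 0 < t) (hα : 0 < α)
    (hmin : α ≤ min s t) (hv : 0 < v)
    (hveq : α * v = (s + 1) * (s * t + α))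
    (G : SimpleGraph (Fin v)) [DecidableRel G.Adj]
    (hG : G.IsSRGWith v (s * (t + 1)) (s - 1 + t * (α - 1)) (α * (t + 1)))
    (p : ℕ) (hp : p.Prime) [Fact p.Prime]
    (hpv : p ∣ v) (hpr : ¬ p ∣ (s + t + 1 - α))
    (𝒜 : Subalgebra (ZMod p) (Matrix (Fin v) (Fin v) (ZMod p)))
    (h𝒜 : Subalgebra.toSubmodule 𝒜 =
      Submodule.span (ZMod p)
        {(1 : Matrix (Fin v) (Fin v) (ZMod p)), G.adjMatrix (ZMod p),
          Matrix.of fun _ _ => (1 : ZMod p)}) :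
    (∀ x : 𝒜, x ∈ Ideal.jacobson (⊥ : Ideal 𝒜) ↔
      (x : Matrix (Fin v) (Fin v) (ZMod p)) ∈
        Submodule.span (ZMod p) {Matrix.of fun _ _ => (1 : ZMod p)}) ∧
    Module.finrank (ZMod p)
      (Submodule.restrictScalars (ZMod p) (Ideal.jacobson (⊥ : Ideal 𝒜))) = 1 ∧
    (Matrix.of fun _ _ => (1 : ZMod p)) * (Matrix.of fun _ _ => (1 : ZMod p)) =
      (0 : Matrix (Fin v) (Fin v) (ZMod p)) := by
  set A : Matrix (Fin v) (Fin v) (ZMod p) := G.adjMatrix (ZMod p) with hA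
  set Jm : Matrix (Fin v) (Fin v) (ZMod p) := Matrix.of fun _ _ => (1 : (ZMod p)) with hJm
  -- numeric facts
  have hαs : α ≤ s := hmin.trans (min_le_left s t)
  have hαt : α ≤ t := hmin.trans (min_le_right s t)
  have hs1 : 1 ≤ s := hs
  have hα1 : 1 ≤ α := hα
  -- scalar abbreviations
  set kc : (ZMod p) := ((s * (t + 1) : ℕ) : (ZMod p)) with hkc
  set lc : (ZMod p) := (((s - 1 + t * (α - 1)) : ℕ) : (ZMod p)) with hlc
  set mc : (ZMod p) := ((α * (t + 1) : ℕ) : (ZMod p)) with hmc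
  set rc : (ZMod p) := (s : (ZMod p)) - (α : (ZMod p)) with hrc
  have hkc' : kc = (s : (ZMod p)) * ((t : (ZMod p)) + 1) := by rw [hkc]; push_cast; ring
  have hlc' : lc = (s : (ZMod p)) - 1 + (t : (ZMod p)) * ((α : (ZMod p)) - 1) := by
    rw [hlc]; push_cast [Nat.cast_sub hs1, Nat.cast_sub hα1]; ring
  have hmc' : mc = (α : (ZMod p)) * ((t : (ZMod p)) + 1) := by rw [hmc]; push_cast; ring
  -- matrix identities
  have hcard : (Fintype.card (Fin v) : (ZMod p)) = 0 := by
    rw [Fintype.card_fin]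
    exact (ZMod.natCast_eq_zero_iff v p).mpr hpv
  have hJJ : Jm * Jm = 0 := srg8_JmJm hcard
  have hAJ : A * Jm = kc • Jm := srg8_AJ G hG.regular
  have hJA : Jm * A = kc • Jm := srg8_JA G hG.regular
  have hA2 : A * A = kc • 1 + lc • A + mc • (Jm - 1 - A) := srg8_A2 G hG
  -- the two "eigen-matrices"
  set B1 : Matrix (Fin v) (Fin v) (ZMod p) := A + ((t : (ZMod p)) + 1) • 1 with hB1
  set B2 : Matrix (Fin v) (Fin v) (ZMod p) := A - rc • 1 with hB2
  have hAB1 : A * B1 = rc • B1 + mc • Jm := by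
    rw [hB1, mul_add, mul_smul_comm, mul_one, hA2]
    match_scalars
    · rw [hkc', hmc', hrc]; ring
    · rw [hlc', hmc', hrc]; ring
    · ring
  have hAB2 : A * B2 = (-((t : (ZMod p)) + 1)) • B2 + mc • Jm := by
    rw [hB2, mul_sub, mul_smul_comm, mul_one, hA2]
    match_scalars
    · rw [hkc', hmc', hrc]; ring
    · rw [hlc', hmc', hrc]; ring
    · ring
  have hJB1 : Jm * B1 = (kc + ((t : (ZMod p)) + 1)) • Jm := by
    rw [hB1, mul_add, mul_smul_comm, mul_one, hJA]
    match_scalars <;> ring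
  have hJB2 : Jm * B2 = (kc - rc) • Jm := by
    rw [hB2, mul_sub, mul_smul_comm, mul_one, hJA]
    match_scalars <;> ring
  -- edge / non-edge
  set i0 : Fin v := ⟨0, hv⟩
  have hdeg : G.degree i0 = s * (t + 1) := hG.regular i0
  have hlt : s * (t + 1) + 1 < v := by
    by_contra h
    push_neg at h
    have h2 : α * v ≤ α * (s * (t + 1) + 1) := Nat.mul_le_mul_left α h
    have h3 : α * (s * t) ≤ s * (s * t) := Nat.mul_le_mul_right (s * t) hαs
    nlinarith [mul_pos hs ht]
  obtain ⟨j1, hj1⟩ : ∃ j1, G.Adj i0 j1 := by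
    have hpos : 0 < (G.neighborFinset i0).card := by
      rw [SimpleGraph.card_neighborFinset_eq_degree, hdeg]; positivity
    obtain ⟨j1, hj1⟩ := Finset.card_pos.mp hpos
    rw [SimpleGraph.mem_neighborFinset] at hj1
    exact ⟨j1, hj1⟩
  obtain ⟨j2, hj2, hj2'⟩ : ∃ j2, j2 ≠ i0 ∧ ¬ G.Adj i0 j2 := by
    have hcard2 : (insert i0 (G.neighborFinset i0)).card < Fintype.card (Fin v) := by
      rw [Fintype.card_fin]
      calc (insert i0 (G.neighborFinset i0)).card ≤ (G.neighborFinset i0).card + 1 :=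
            Finset.card_insert_le _ _
      _ = s * (t + 1) + 1 := by rw [SimpleGraph.card_neighborFinset_eq_degree, hdeg]
      _ < v := hlt
    obtain ⟨j2, hj2⟩ : ∃ j2, j2 ∉ insert i0 (G.neighborFinset i0) := by
      by_contra hcon
      push_neg at hcon
      have hsub : (Finset.univ : Finset (Fin v)) ⊆ insert i0 (G.neighborFinset i0) :=
        fun x _ => hcon x
      have := Finset.card_le_card hsub
      rw [Finset.card_univ] at this
      omega
    simp only [Finset.mem_insert, SimpleGraph.mem_neighborFinset, not_or] at hj2
    exact ⟨j2, hj2.1, hj2.2⟩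
  have hAne : ∀ e w : ZMod p, A + e • (1 : Matrix (Fin v) (Fin v) (ZMod p)) + w • Jm ≠ 0 := by
    intro e w hEq
    have h1 := congrFun (congrFun hEq i0) j1
    have h2 := congrFun (congrFun hEq i0) j2
    simp only [Matrix.add_apply, Matrix.smul_apply, Matrix.zero_apply, hA, hJm,
      SimpleGraph.adjMatrix_apply, Matrix.of_apply, smul_eq_mul, mul_one,
      Matrix.one_apply_ne (G.ne_of_adj hj1), Matrix.one_apply_ne (Ne.symm hj2), hj1, hj2',
      if_true, if_false] at h1 h2
    rw [mul_zero, add_zero] at h1 h2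
    -- h1 : 1 + w = 0, h2 : 0 + w = 0 (roughly)
    have : (1 : (ZMod p)) = 0 := by linear_combination h1 - h2
    exact one_ne_zero this
  have hJne : Jm ≠ 0 := by
    intro h
    have := congrFun (congrFun h i0) i0
    simp [hJm] at this
  -- membership translation
  have hmem : ∀ N : Matrix (Fin v) (Fin v) (ZMod p), N ∈ 𝒜 ↔
      N ∈ Submodule.span (ZMod p) {(1 : Matrix (Fin v) (Fin v) (ZMod p)), A, Jm} := by
    intro N
    rw [← Subalgebra.mem_toSubmodule, h𝒜]
  have hJmem : Jm ∈ 𝒜 := (hmem Jm).mpr (Submodule.subset_span (by simp))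
  have hmulJ : ∀ N ∈ Submodule.span (ZMod p) {(1 : Matrix (Fin v) (Fin v) (ZMod p)), A, Jm},
      ∃ e : ZMod p, N * Jm = e • Jm := by
    intro N hN
    induction hN using Submodule.span_induction with
    | mem N hN =>
      rcases hN with rfl | rfl | rfl
      · exact ⟨1, by rw [one_mul, one_smul]⟩
      · exact ⟨kc, hAJ⟩
      · exact ⟨0, by rw [hJJ, zero_smul]⟩
    | zero => exact ⟨0, by rw [zero_mul, zero_smul]⟩
    | add x y hx hy ihx ihy =>
      obtain ⟨e1, h1⟩ := ihx
      obtain ⟨e2, h2⟩ := ihy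
      exact ⟨e1 + e2, by rw [add_mul, h1, h2, add_smul]⟩
    | smul r x hx ihx =>
      obtain ⟨e1, h1⟩ := ihx
      exact ⟨r * e1, by rw [smul_mul_assoc, h1, smul_smul]⟩
  -- main iff
  have hmain : ∀ x : 𝒜, x ∈ Ideal.jacobson (⊥ : Ideal 𝒜) ↔
      (x : Matrix (Fin v) (Fin v) (ZMod p)) ∈ Submodule.span (ZMod p) {Jm} := by
    intro x
    constructor
    · -- radical → span J
      intro hx
      obtain ⟨a, z, hz, hxz⟩ := Submodule.mem_span_insert.mp ((hmem _).mp x.2)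
      obtain ⟨b, z', hz', hzz⟩ := Submodule.mem_span_insert.mp hz
      obtain ⟨c, hc⟩ := Submodule.mem_span_singleton.mp hz'
      have hM : (x : Matrix (Fin v) (Fin v) (ZMod p)) = a • 1 + b • A + c • Jm := by
        rw [hxz, hzz, ← hc, add_assoc]
      set M := (x : Matrix (Fin v) (Fin v) (ZMod p)) with hMdef
      have hMJ : M * Jm = (a + b * kc) • Jm := by
        rw [hM, add_mul, add_mul, smul_mul_assoc, smul_mul_assoc, smul_mul_assoc, one_mul,
          hAJ, hJJ, smul_zero, add_zero, smul_smul]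
        match_scalars; ring
      have hMB1 : M * B1 = (a + b * rc) • B1 + (b * mc + c * (kc + ((t : (ZMod p)) + 1))) • Jm := by
        rw [hM, add_mul, add_mul, smul_mul_assoc, smul_mul_assoc, smul_mul_assoc, one_mul,
          hAB1, hJB1]
        match_scalars <;> ring
      have hMB2 : M * B2 = (a + b * (-((t : (ZMod p)) + 1))) • B2 + (b * mc + c * (kc - rc)) • Jm := by
        rw [hM, add_mul, add_mul, smul_mul_assoc, smul_mul_assoc, smul_mul_assoc, one_mul,
          hAB2, hJB2]
        match_scalars <;> ring
      have hB1ne : ∀ w : ZMod p, B1 + w • Jm ≠ 0 := by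
        intro w h
        exact hAne ((t : (ZMod p)) + 1) w (by rw [← h, hB1])
      have hB2ne : ∀ w : ZMod p, B2 + w • Jm ≠ 0 := by
        intro w h
        apply hAne (-rc) w
        rw [← h, hB2, sub_eq_add_neg, neg_smul]
      -- β₁ = 0
      have key : ∀ (β : (ZMod p)) (B : Matrix (Fin v) (Fin v) (ZMod p)) (d : (ZMod p)),
          M * B = β • B + d • Jm → (∀ w : ZMod p, B + w • Jm ≠ 0) → β = 0 := by
        intro β B d hMB hBne
        by_contra hβ
        obtain ⟨z, hz⟩ := Ideal.mem_jacobson_iff.mp hx ⟨(-β⁻¹) • 1,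
          Subalgebra.smul_mem 𝒜 (one_mem 𝒜) _⟩
        rw [Ideal.mem_bot, sub_eq_zero] at hz
        have hzc : (z : Matrix (Fin v) (Fin v) (ZMod p)) * ((-β⁻¹) • M + 1) = 1 := by
          have := congrArg (Subtype.val) hz
          push_cast at this
          rw [mul_add, mul_one]
          calc (z : Matrix (Fin v) (Fin v) (ZMod p)) * ((-β⁻¹) • M) + (z : Matrix (Fin v) (Fin v) (ZMod p))
              = (z : Matrix (Fin v) (Fin v) (ZMod p)) * ((-β⁻¹) • 1) * M
                + (z : Matrix (Fin v) (Fin v) (ZMod p)) := by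
                rw [mul_assoc, smul_mul_assoc, one_mul]
          _ = 1 := this
        exact srg8_noinv hβ hMB (hMJ) hBne hJne hzc
      have hb1 : a + b * rc = 0 := key _ _ _ hMB1 hB1ne
      have hb2 : a + b * (-((t : (ZMod p)) + 1)) = 0 := key _ _ _ hMB2 hB2ne
      have hrs : rc - (-((t : (ZMod p)) + 1)) ≠ 0 := by
        have hcast : ((s + t + 1 - α : ℕ) : (ZMod p)) = rc + (t : (ZMod p)) + 1 := by
          rw [hrc, Nat.cast_sub (by omega)]
          push_cast; ring
        intro h
        apply hpr
        rw [← ZMod.natCast_eq_zero_iff, hcast]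
        linear_combination h
      have hb : b = 0 := by
        have h3 : b * (rc - (-((t : (ZMod p)) + 1))) = 0 := by linear_combination hb1 - hb2
        rcases mul_eq_zero.mp h3 with h | h
        · exact h
        · exact absurd h hrs
      have ha : a = 0 := by
        rw [hb, zero_mul, add_zero] at hb1
        exact hb1
      rw [hM, ha, hb, zero_smul, zero_smul, zero_add, zero_add]
      exact Submodule.mem_span_singleton.mpr ⟨c, rfl⟩
    · -- span J → radical
      intro hx
      obtain ⟨c, hc⟩ := Submodule.mem_span_singleton.mp hx
      rw [Ideal.mem_jacobson_iff]
      intro y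
      obtain ⟨e, he⟩ := hmulJ (y : Matrix (Fin v) (Fin v) (ZMod p)) ((hmem _).mp y.2)
      have hyx : (y : Matrix (Fin v) (Fin v) (ZMod p)) * (x : Matrix (Fin v) (Fin v) (ZMod p))
          = (c * e) • Jm := by
        rw [← hc, mul_smul_comm, he, smul_smul]
      refine ⟨⟨1 - (c * e) • Jm, sub_mem (one_mem 𝒜) (Subalgebra.smul_mem 𝒜 hJmem _)⟩, ?_⟩
      rw [Ideal.mem_bot]
      apply Subtype.ext
      show (1 - (c * e) • Jm) * (y : Matrix (Fin v) (Fin v) (ZMod p))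
          * (x : Matrix (Fin v) (Fin v) (ZMod p)) + (1 - (c * e) • Jm) - 1 = 0
      rw [mul_assoc, hyx, sub_mul, one_mul, smul_mul_assoc, mul_smul_comm, hJJ]
      simp
  -- assemble
  refine ⟨hmain, ?_, hJJ⟩
  · have hjAne : (⟨Jm, hJmem⟩ : 𝒜) ≠ 0 := by
      intro h
      exact hJne (congrArg Subtype.val h)
    have hsub : Submodule.restrictScalars (ZMod p) (Ideal.jacobson (⊥ : Ideal 𝒜)) =
        Submodule.span (ZMod p) {(⟨Jm, hJmem⟩ : 𝒜)} := by
      ext x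
      rw [Submodule.restrictScalars_mem, hmain x, Submodule.mem_span_singleton,
        Submodule.mem_span_singleton]
      constructor
      · rintro ⟨c, hc⟩
        exact ⟨c, Subtype.ext (by rw [← hc]; rfl)⟩
      · rintro ⟨c, hc⟩
        exact ⟨c, by rw [← congrArg Subtype.val hc]; rfl⟩
    rw [hsub]
    exact finrank_span_singleton hjAne
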